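/- For all integers k ≥ 1 and i ≥ 0, Σ_{r=0}^{k} (−1)^r (C(i+2r, r) − C(i+2r, r−1)) · C(i+k+r, k−r) = 0, where C(n,m) = 0 whenever m < 0 or m > n. -/

import Mathlib

open Finset

/-- Binomial coefficient `C(n,m)` with the convention that it is `0`
whenever `m < 0` or `m > n`. -/
def chooseZ (n : ℕ) (m : ℤ) : ℤ := if 0 ≤ m then (n.choose m.toNat : ℤ) else 0

lemma chooseZ_natCast (n m : ℕ) : chooseZ n (m : ℤ) = (n.choose m : ℤ) := by
  simp [chooseZ]

lemma ctiA (i r : ℕ) :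
    ((i : ℤ) + r + 1) * (chooseZ (i + 2 * r) (r : ℤ) - chooseZ (i + 2 * r) ((r : ℤ) - 1)) =
      ((i : ℤ) + 1) * ((i + 2 * r).choose r : ℤ) := by
  rcases r with _ | s
  · simp [chooseZ]
  · have h : (i + 2 * (s+1)).choose (s+1) * (s+1) = (i + 2 * (s+1)).choose s * (i + s + 2) := by
      have := Nat.choose_succ_right_eq (i + 2 * (s+1)) s
      have e : i + 2 * (s+1) - s = i + s + 2 := by omega
      rwa [e] at this
    have hz : chooseZ (i + 2 * (s+1)) ((s+1 : ℕ) : ℤ) = ((i + 2 * (s+1)).choose (s+1) : ℤ) :=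
      chooseZ_natCast _ _
    have hz2 : chooseZ (i + 2 * (s+1)) (((s+1 : ℕ) : ℤ) - 1) = ((i + 2 * (s+1)).choose s : ℤ) := by
      have e : ((s+1 : ℕ) : ℤ) - 1 = ((s : ℕ) : ℤ) := by push_cast; ring
      rw [e, chooseZ_natCast]
    rw [hz, hz2]
    have h' : ((i + 2 * (s+1)).choose (s+1) : ℤ) * ((s:ℤ)+1)
        = ((i + 2 * (s+1)).choose s : ℤ) * ((i:ℤ) + s + 2) := by exact_mod_cast h
    push_cast
    linear_combination h'

lemma ctiB1 (i r : ℕ) :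
    ((r : ℤ) + 1) * ((i : ℤ) + r + 1) * ((i + 2 * r + 2).choose (r+1) : ℤ) =
      ((i : ℤ) + 2 * r + 1) * ((i : ℤ) + 2 * r + 2) * ((i + 2 * r).choose r : ℤ) := by
  have h1 := Nat.add_one_mul_choose_eq (i + 2 * r + 1) r
  have h2 := Nat.add_one_mul_choose_eq (i + 2 * r) r
  have h3 : (i + 2 * r + 1).choose (r+1) * (r+1) = (i + 2 * r + 1).choose r * (i + r + 1) := by
    have := Nat.choose_succ_right_eq (i + 2 * r + 1) r
    have e : i + 2 * r + 1 - r = i + r + 1 := by omega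
    rwa [e] at this
  have h1' : ((i : ℤ) + 2*r + 2) * ((i + 2 * r + 1).choose r : ℤ)
      = ((i + 2 * r + 2).choose (r+1) : ℤ) * ((r:ℤ)+1) := by exact_mod_cast h1
  have h2' : ((i : ℤ) + 2*r + 1) * ((i + 2 * r).choose r : ℤ)
      = ((i + 2 * r + 1).choose (r+1) : ℤ) * ((r:ℤ)+1) := by exact_mod_cast h2
  have h3' : ((i + 2 * r + 1).choose (r+1) : ℤ) * ((r:ℤ)+1)
      = ((i + 2 * r + 1).choose r : ℤ) * ((i:ℤ) + r + 1) := by exact_mod_cast h3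
  linear_combination (-((i:ℤ) + r + 1)) * h1' - ((i:ℤ) + 2*r + 2) * h3' - ((i:ℤ) + 2*r + 2) * h2'

lemma ctiB2 (n m : ℕ) :
    ((n : ℤ) + 1) * ((n : ℤ) + 2) * ((n + m + 2).choose m : ℤ) =
      ((m : ℤ) + 1) * ((n : ℤ) + m + 2) * ((n + m + 1).choose (m+1) : ℤ) := by
  have h4 : (n + m + 2).choose (m+1) * (m+1) = (n + m + 2).choose m * (n + 2) := by
    have := Nat.choose_succ_right_eq (n + m + 2) m
    have e : n + m + 2 - m = n + 2 := by omega
    rwa [e] at this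
  have h5 := Nat.choose_mul_succ_eq (n + m + 1) (m+1)
  have e5 : n + m + 1 + 1 - (m + 1) = n + 1 := by omega
  rw [e5] at h5
  have h4' : ((n + m + 2).choose (m+1) : ℤ) * ((m:ℤ)+1)
      = ((n + m + 2).choose m : ℤ) * ((n:ℤ) + 2) := by exact_mod_cast h4
  have h5' : ((n + m + 1).choose (m+1) : ℤ) * ((n:ℤ) + m + 2)
      = ((n + m + 2).choose (m+1) : ℤ) * ((n:ℤ) + 1) := by exact_mod_cast h5
  linear_combination (-((n:ℤ)+1)) * h4' + (-((m:ℤ)+1)) * h5'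

theorem catalan_triangle_identity_two :
    ∀ k i : ℕ, 1 ≤ k →
      ∑ r ∈ Finset.range (k + 1), (-1 : ℤ) ^ r *
        (chooseZ (i + 2 * r) (r : ℤ) - chooseZ (i + 2 * r) ((r : ℤ) - 1)) *
        ((i + k + r).choose (k - r) : ℤ) = 0 := by
  intro k i hk
  set H : ℕ → ℤ := fun r => if r ≤ k then
      (-1 : ℤ)^(r+1) * r * ((i:ℤ)+1) * ((i + 2*r).choose r : ℤ) * ((i + k + r).choose (k - r) : ℤ)
    else 0 with hH
  have hc : (k : ℤ) * ((i:ℤ) + k + 1) ≠ 0 := by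
    have hk' : (0:ℤ) < (k:ℤ) := by exact_mod_cast hk
    positivity
  have key : ∀ r ∈ Finset.range (k+1),
      (k : ℤ) * ((i:ℤ) + k + 1) * ((-1 : ℤ) ^ r *
        (chooseZ (i + 2 * r) (r : ℤ) - chooseZ (i + 2 * r) ((r : ℤ) - 1)) *
        ((i + k + r).choose (k - r) : ℤ)) = H (r+1) - H r := by
    intro r hr
    rw [Finset.mem_range] at hr
    have hrk : r ≤ k := by omega
    have hA := ctiA i r
    have hir : ((i:ℤ) + r + 1) ≠ 0 := by positivity
    rcases eq_or_lt_of_le hrk with heq | hlt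
    · subst heq
      have h1 : ¬ (r + 1 ≤ r) := by omega
      simp only [hH, if_pos (le_refl r), if_neg h1, Nat.sub_self, Nat.choose_zero_right,
        Nat.cast_one, mul_one, zero_sub]
      linear_combination ((r:ℤ) * (-1:ℤ)^r) * hA
    · obtain ⟨j, rfl⟩ : ∃ j, k = r + 1 + j := ⟨k - r - 1, by omega⟩
      have h1 : r + 1 ≤ r + 1 + j := by omega
      have h2 : r ≤ r + 1 + j := by omega
      have e1 : r + 1 + j - r = j + 1 := by omega
      have e2 : r + 1 + j - (r + 1) = j := by omega
      simp only [hH, if_pos h1, if_pos h2, e1, e2]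
      have hB1 := ctiB1 i r
      have hB2 := ctiB2 (i + 2*r) j
      have eb1 : i + 2 * (r+1) = i + 2*r + 2 := by ring
      have eb2 : i + (r + 1 + j) + (r + 1) = i + 2*r + j + 2 := by ring
      have eb3 : i + (r + 1 + j) + r = i + 2*r + j + 1 := by ring
      rw [eb1, eb2, eb3]
      apply mul_left_cancel₀ hir
      push_cast
      push_cast at hA hB1 hB2
      linear_combination
        (((r:ℤ)+1+(j:ℤ)) * ((i:ℤ)+(r:ℤ)+1+(j:ℤ)+1) * (-1:ℤ)^r * ((i + 2*r + j + 1).choose (j+1) : ℤ)) * hA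
        + (-((i:ℤ)+1) * (-1:ℤ)^r * ((i + 2*r + j + 2).choose j : ℤ)) * hB1
        + (-((i:ℤ)+1) * (-1:ℤ)^r * ((i + 2*r).choose r : ℤ)) * hB2
  have hsum : (k : ℤ) * ((i:ℤ) + k + 1) *
      (∑ r ∈ Finset.range (k + 1), (-1 : ℤ) ^ r *
        (chooseZ (i + 2 * r) (r : ℤ) - chooseZ (i + 2 * r) ((r : ℤ) - 1)) *
        ((i + k + r).choose (k - r) : ℤ)) = 0 := by
    rw [Finset.mul_sum, Finset.sum_congr rfl key, Finset.sum_range_sub H (k+1)]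
    have h0 : H 0 = 0 := by simp [hH]
    have hk1 : H (k+1) = 0 := by
      have : ¬ (k + 1 ≤ k) := by omega
      simp [hH, this]
    rw [h0, hk1, sub_zero]
  rcases mul_eq_zero.mp hsum with h | h
  · exact absurd h hc
  · exact h
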